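/- Let R be a (left) nearfield which is not distributive, i.e. there exist α, β, λ ∈ R with (α+β)·λ ≠ α·λ + β·λ, and let n be a positive integer. A subset N ⊆ R^n is a subspace of R^n if and only if there exists a set J ⊆ {1, …, n} such that N = { x ∈ R^n : x_j = 0 for all j ∉ J }; equivalently, the subspaces of R^n are exactly the sets S_1 × S_2 × ⋯ × S_n where each S_i is either {0} or R. -/

import Mathlib

/-- A (left) nearfield: `(R,+)` is an abelian group, multiplication is associative
with identity `1 ≠ 0`, every nonzero element has a two-sided inverse,
`0` multiplies to `0` on both sides, and the left distributive law holds. -/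
class Nearfield (R : Type*) extends AddCommGroup R, One R, Mul R where
  mul_assoc : ∀ a b c : R, a * b * c = a * (b * c)
  one_mul : ∀ a : R, 1 * a = a
  mul_one : ∀ a : R, a * 1 = a
  one_ne_zero : (1 : R) ≠ 0
  zero_mul : ∀ a : R, 0 * a = 0
  mul_zero : ∀ a : R, a * 0 = 0
  left_distrib : ∀ a b c : R, a * (b + c) = a * b + a * c
  exists_inv : ∀ a : R, a ≠ 0 → ∃ b : R, a * b = 1 ∧ b * a = 1

variable {R : Type*} [Nearfield R] {n : ℕ}

/-- Right scalar multiplication on `R^n`: `(x · r) j = x j * r`. -/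
def vsmul (x : Fin n → R) (r : R) : Fin n → R := fun j => x j * r

/-- An `R`-subgroup of `R^n`: an additive subgroup closed under right scalar
multiplication. -/
def IsRSubgroup (S : Set (Fin n → R)) : Prop :=
  (0 : Fin n → R) ∈ S ∧ (∀ x ∈ S, ∀ y ∈ S, x + y ∈ S) ∧ (∀ x ∈ S, -x ∈ S) ∧
    ∀ x ∈ S, ∀ r : R, vsmul x r ∈ S

/-- `nvGen V` is the smallest `R`-subgroup of `R^n` containing `V`
(the intersection of all `R`-subgroups containing `V`). -/
def nvGen (V : Set (Fin n → R)) : Set (Fin n → R) :=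
  { x | ∀ S : Set (Fin n → R), IsRSubgroup S → V ⊆ S → x ∈ S }

/-- A subspace of `R^n`: an additive subgroup `N` with `(x+y)·r − x·r ∈ N`
for all `x ∈ R^n`, `y ∈ N`, `r ∈ R`. -/
def IsSubspace (N : Set (Fin n → R)) : Prop :=
  (0 : Fin n → R) ∈ N ∧ (∀ x ∈ N, ∀ y ∈ N, x + y ∈ N) ∧ (∀ x ∈ N, -x ∈ N) ∧
    ∀ x : Fin n → R, ∀ y ∈ N, ∀ r : R, vsmul (x + y) r - vsmul x r ∈ N

/-- `nvSpan V` is the smallest subspace of `R^n` containing `V`. -/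
def nvSpan (V : Set (Fin n → R)) : Set (Fin n → R) :=
  { x | ∀ N : Set (Fin n → R), IsSubspace N → V ⊆ N → x ∈ N }

/-- `nvLC V 0 = V` and `nvLC V (m+1)` is the set of all finite right `R`-linear
combinations of elements of `nvLC V m`. -/
def nvLC (V : Set (Fin n → R)) : ℕ → Set (Fin n → R)
  | 0 => V
  | m + 1 => { x | ∃ F : Finset (Fin n → R), ↑F ⊆ nvLC V m ∧
      ∃ lam : (Fin n → R) → R, x = ∑ w ∈ F, vsmul w (lam w) }

lemma vsmul_zero_left (r : R) : vsmul (0 : Fin n → R) r = 0 := by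
  funext k; simp [vsmul, Nearfield.zero_mul]

lemma vsmul_mem {N : Set (Fin n → R)} (hN : IsSubspace N) {y} (hy : y ∈ N) (r : R) :
    vsmul y r ∈ N := by
  have h := hN.2.2.2 0 y hy r
  simpa [vsmul_zero_left] using h

lemma single_mem {N : Set (Fin n → R)} (hN : IsSubspace N)
    (hd : ∃ α β lam : R, (α + β) * lam ≠ α * lam + β * lam)
    {j : Fin n} {y : Fin n → R} (hy : y ∈ N) (hyj : y j ≠ 0) (r : R) :
    Pi.single j r ∈ N := by
  obtain ⟨α, β, lam, hαβ⟩ := hd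
  obtain ⟨b, hb1, _⟩ := Nearfield.exists_inv (y j) hyj
  set y' := vsmul y (b * β) with hy'
  have hy'N : y' ∈ N := vsmul_mem hN hy _
  have hy'j : y' j = β := by
    simp [hy', vsmul, ← Nearfield.mul_assoc, hb1, Nearfield.one_mul]
  set δ := (α + β) * lam - (α * lam + β * lam) with hδdef
  have hδ0 : δ ≠ 0 := sub_ne_zero.mpr hαβ
  have hz : vsmul (Pi.single j α + y') lam - vsmul (Pi.single j α) lam ∈ N :=
    hN.2.2.2 _ _ hy'N lam
  have hw : vsmul y' lam ∈ N := vsmul_mem hN hy'N lam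
  have hmem : vsmul (Pi.single j α + y') lam - vsmul (Pi.single j α) lam
      - vsmul y' lam ∈ N := by
    rw [sub_eq_add_neg _ (vsmul y' lam)]
    exact hN.2.1 _ hz _ (hN.2.2.1 _ hw)
  have heq : vsmul (Pi.single j α + y') lam - vsmul (Pi.single j α) lam - vsmul y' lam
      = Pi.single j δ := by
    funext k
    by_cases hk : k = j
    · subst hk
      simp [vsmul, hy'j, hδdef, sub_sub]
    · simp [vsmul, Pi.single_eq_of_ne hk, Nearfield.zero_mul]
  rw [heq] at hmem
  obtain ⟨d, hd1, _⟩ := Nearfield.exists_inv δ hδ0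
  have hmem2 : vsmul (Pi.single j δ) (d * r) ∈ N := vsmul_mem hN hmem _
  have heq2 : vsmul (Pi.single j δ) (d * r) = Pi.single j r := by
    funext k
    by_cases hk : k = j
    · subst hk; simp [vsmul, ← Nearfield.mul_assoc, hd1, Nearfield.one_mul]
    · simp [vsmul, Pi.single_eq_of_ne hk, Nearfield.zero_mul]
  rwa [heq2] at hmem2

/-- in a non-distributive nearfield, `N ⊆ R^n` is a subspace iff
it is a coordinate subspace `{x | x_j = 0 for all j ∉ J}` for some `J`. -/
theorem isSubspace_iff_coordinate
    (hd : ∃ α β lam : R, (α + β) * lam ≠ α * lam + β * lam)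
    (hn : 0 < n) (N : Set (Fin n → R)) :
    IsSubspace N ↔
      ∃ J : Set (Fin n), N = { x : Fin n → R | ∀ j ∉ J, x j = 0 } := by
  constructor
  · intro hN
    refine ⟨{ j | ∃ y ∈ N, y j ≠ 0 }, ?_⟩
    ext x
    simp only [Set.mem_setOf_eq]
    constructor
    · intro hx j hj
      by_contra h
      exact hj ⟨x, hx, h⟩
    · intro hx
      have hG : ∀ j : Fin n, Pi.single j (x j) ∈ N := by
        intro j
        by_cases h : x j = 0
        · rw [h]
          simpa using hN.1
        · have hj : ∃ y ∈ N, y j ≠ 0 := by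
            by_contra hc
            exact h (hx j hc)
          obtain ⟨y, hyN, hyj⟩ := hj
          exact single_mem hN hd hyN hyj _
      have hsum : ∀ s : Finset (Fin n), (∑ j ∈ s, Pi.single j (x j)) ∈ N := by
        intro s
        induction s using Finset.induction with
        | empty => simpa using hN.1
        | insert _ _ hnotin ih =>
            rw [Finset.sum_insert hnotin]
            exact hN.2.1 _ (hG _) _ ih
      have hx' := hsum Finset.univ
      rwa [Finset.univ_sum_single] at hx'
  · rintro ⟨J, rfl⟩
    refine ⟨fun j _ => rfl, ?_, ?_, ?_⟩
    · intro x hx y hy j hj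
      simp [hx j hj, hy j hj]
    · intro x hx j hj
      simp [hx j hj]
    · intro x y hy r j hj
      simp [vsmul, hy j hj]
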